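/- If the Fraser product ⊻_α L_α has the covering property, then every L_α has the covering property; conversely, if each L_α has the covering property and at most one L_β is not a power set, then ⊻_α L_α has the covering property. Moreover, if every L_α not equal to the power set contains MO₄ (four atoms p,q,r,s with p ∨ q covering all four), then ⊻_α L_α having the covering property forces at most one L_β to not be a power set. -/
import Mathlib


open Set

/-- A simple closure space on `σ`: a family of subsets closed under arbitrary
intersections (the empty intersection giving `univ`), containing `∅` and all singletons. -/
def IsSCS {σ : Type*} (L : Set (Set σ)) : Prop :=
  (∀ ω ⊆ L, ⋂₀ ω ∈ L) ∧ (∅ : Set σ) ∈ L ∧ ∀ p : σ, {p} ∈ L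

/-- The join of a subset `A` of atoms/points in a simple closure space `L`. -/
def sJoin {σ : Type*} (L : Set (Set σ)) (A : Set σ) : Set σ := ⋂₀ {b ∈ L | A ⊆ b}

/-- `b` covers `a` in `L`. -/
def CoversIn {σ : Type*} (L : Set (Set σ)) (a b : Set σ) : Prop :=
  a ⊂ b ∧ ∀ c ∈ L, a ⊆ c → c ⊆ b → c = a ∨ c = b

/-- `x` is a coatom of `L`. -/
def IsCoatomOf {σ : Type*} (L : Set (Set σ)) (x : Set σ) : Prop :=
  x ∈ L ∧ x ≠ univ ∧ ∀ c ∈ L, x ⊆ c → c = x ∨ c = univ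

/-- `L` is coatomistic: every element is a meet of coatoms. -/
def Coatomistic {σ : Type*} (L : Set (Set σ)) : Prop :=
  ∀ a ∈ L, a = ⋂₀ {x | IsCoatomOf L x ∧ a ⊆ x}

/-- Covering property: for any atom `p` and `a ∈ L` with `p ∧ a = 0`,
`p ∨ a` covers `a`. -/
def HasCovProp {σ : Type*} (L : Set (Set σ)) : Prop :=
  ∀ p : σ, ∀ a ∈ L, p ∉ a → CoversIn L a (sJoin L (insert p a))

/-- Covering property of the dual lattice of `L`. -/
def HasDualCovProp {σ : Type*} (L : Set (Set σ)) : Prop :=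
  ∀ x, IsCoatomOf L x → ∀ a ∈ L, sJoin L (x ∪ a) = univ → CoversIn L (x ∩ a) a

/-- `f` is an orthocomplementation of `L`: an order-reversing involution with
`a ∨ f a = 1` for all `a ∈ L`. -/
def IsOrthoOn {σ : Type*} (L : Set (Set σ)) (f : Set σ → Set σ) : Prop :=
  (∀ a ∈ L, f a ∈ L) ∧ (∀ a ∈ L, f (f a) = a) ∧
  (∀ a ∈ L, ∀ b ∈ L, a ⊆ b → f b ⊆ f a) ∧
  (∀ a ∈ L, ∀ b ∈ L, a ∪ f a ⊆ b → b = univ)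

/-- The permutation `g` of the points induces an automorphism of `L`. -/
def IsAutoOn {σ : Type*} (L : Set (Set σ)) (g : Equiv.Perm σ) : Prop :=
  ∀ a, a ∈ L ↔ g '' a ∈ L

/-- `L` contains `MO₃`: three distinct atoms `p, q, r` such that `p ∨ q`
covers each of them. -/
def ContainsMO3 {σ : Type*} (L : Set (Set σ)) : Prop :=
  ∃ p q r : σ, p ≠ q ∧ p ≠ r ∧ q ≠ r ∧
    CoversIn L {p} (sJoin L {p, q}) ∧ CoversIn L {q} (sJoin L {p, q}) ∧
    CoversIn L {r} (sJoin L {p, q})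

/-- `L` contains `MO₄`: four distinct atoms `p, q, r, s` such that `p ∨ q`
covers each of them. -/
def ContainsMO4 {σ : Type*} (L : Set (Set σ)) : Prop :=
  ∃ p q r s : σ, p ≠ q ∧ p ≠ r ∧ p ≠ s ∧ q ≠ r ∧ q ≠ s ∧ r ≠ s ∧
    CoversIn L {p} (sJoin L {p, q}) ∧ CoversIn L {q} (sJoin L {p, q}) ∧
    CoversIn L {r} (sJoin L {p, q}) ∧ CoversIn L {s} (sJoin L {p, q})

/-- A connected covering of the point set of `L`. -/
def IsConnCover {σ : Type*} (L : Set (Set σ)) (𝒜 : Set (Set σ)) : Prop :=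
  ⋃₀ 𝒜 = Set.univ ∧
  (∀ A ∈ 𝒜, ∃ p q : σ, p ∈ A ∧ q ∈ A ∧ p ≠ q) ∧
  (∀ A ∈ 𝒜, ∀ p ∈ A, ∀ q ∈ A, p ≠ q → ∃ r, r ∈ sJoin L {p, q} ∧ r ≠ p ∧ r ≠ q) ∧
  (∀ p q : σ, ∃ n : ℕ, ∃ c : Fin (n + 1) → Set σ, (∀ i, c i ∈ 𝒜) ∧
    p ∈ c 0 ∧ q ∈ c (Fin.last n) ∧
    ∀ i : Fin n, ∃ x y : σ, x ≠ y ∧ (x ∈ c i.castSucc ∧ x ∈ c i.succ) ∧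
      (y ∈ c i.castSucc ∧ y ∈ c i.succ))

/-- `L` is weakly connected: `L ≠ 2` and there is a connected covering. -/
def WeaklyConnected {σ : Type*} (L : Set (Set σ)) : Prop :=
  (∃ p q : σ, p ≠ q) ∧ ∃ 𝒜, IsConnCover L 𝒜

/-- Restriction of `L` to the subset `e`, as a family of subsets of `↥e`. -/
def restrictCS {σ : Type*} (L : Set (Set σ)) (e : Set σ) : Set (Set e) :=
  {B | ∃ a ∈ L, a ⊆ e ∧ B = Subtype.val ⁻¹' a}

/-- Center of an orthocomplemented simple closure space: elements whose
orthocomplement is the set complement. -/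
def centerOf {σ : Type*} (L : Set (Set σ)) (f : Set σ → Set σ) : Set (Set σ) :=
  {a ∈ L | f a = aᶜ}

/-- Central cover of a point `p`. -/
def centralCover {σ : Type*} (L : Set (Set σ)) (f : Set σ → Set σ) (p : σ) : Set σ :=
  ⋂₀ {a ∈ centerOf L f | p ∈ a}

section Family

variable {Ω : Type*} {X : Ω → Type*}

/-- `⋃_α π_α⁻¹ (a α)`. -/
def cylUnion (a : ∀ α, Set (X α)) : Set (∀ α, X α) := {p | ∃ α, p α ∈ a α}

/-- `p[B, β]`: the point `p` with its `β`-th coordinate varying over `B`. -/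
def pSub (p : ∀ α, X α) (β : Ω) (B : Set (X β)) : Set (∀ α, X α) :=
  {q | q β ∈ B ∧ ∀ α, α ≠ β → q α = p α}

/-- The section `R_β[p]` of `R ⊆ ∏_α X α`. -/
def sect (R : Set (∀ α, X α)) (β : Ω) (p : ∀ α, X α) : Set (X β) :=
  {q | ∃ r ∈ R, r β = q ∧ ∀ α, α ≠ β → r α = p α}

/-- The box product `⊼_α L_α`: all nonempty intersections of the sets
`⋃_α π_α⁻¹ (a α)`. -/
def boxProd (L : ∀ α, Set (Set (X α))) : Set (Set (∀ α, X α)) :=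
  {A | ∃ ω ⊆ {B | ∃ a : ∀ α, Set (X α), (∀ α, a α ∈ L α) ∧ B = cylUnion a},
    ω.Nonempty ∧ A = ⋂₀ ω}

/-- The Fraser product `⊻_α L_α`: all `R` whose sections all lie in the factors. -/
def fraserProd (L : ∀ α, Set (Set (X α))) : Set (Set (∀ α, X α)) :=
  {R | ∀ β, ∀ p : ∀ α, X α, sect R β p ∈ L β}

/-- `M` is a weak tensor product of the family `L`: axioms P1–P3. -/
def IsWTP (L : ∀ α, Set (Set (X α))) (M : Set (Set (∀ α, X α))) : Prop :=
  IsSCS M ∧ (∀ a : ∀ α, Set (X α), (∀ α, a α ∈ L α) → cylUnion a ∈ M) ∧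
  (∀ p : ∀ α, X α, ∀ β, ∀ B : Set (X β), pSub p β B ∈ M → B ∈ L β)

/-- The closure operator `⋁_β R = ⋃_p p[⋁ R_β[p]]`. -/
def vJoin (L : ∀ α, Set (Set (X α))) (β : Ω) (R : Set (∀ α, X α)) : Set (∀ α, X α) :=
  ⋃ p : ∀ α, X α, pSub p β (sJoin (L β) (sect R β p))

/-- The orthocomplementation `#` induced on the box product by
orthocomplementations of the factors. -/
def sharp (f : ∀ α, Set (X α) → Set (X α)) (a : Set (∀ α, X α)) : Set (∀ α, X α) :=
  {p | ∀ q ∈ a, ∃ α, p α ∈ f α {q α}}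

end Family

section Binary

variable {X₁ X₂ : Type*}

/-- `a₁ × Σ₂ ∪ Σ₁ × a₂`. -/
def cylUnion₂ (a₁ : Set X₁) (a₂ : Set X₂) : Set (X₁ × X₂) := {p | p.1 ∈ a₁ ∨ p.2 ∈ a₂}

/-- Binary box product. -/
def boxProd₂ (L₁ : Set (Set X₁)) (L₂ : Set (Set X₂)) : Set (Set (X₁ × X₂)) :=
  {A | ∃ ω ⊆ {B | ∃ a₁ ∈ L₁, ∃ a₂ ∈ L₂, B = cylUnion₂ a₁ a₂}, ω.Nonempty ∧ A = ⋂₀ ω}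

/-- Binary Fraser product. -/
def fraserProd₂ (L₁ : Set (Set X₁)) (L₂ : Set (Set X₂)) : Set (Set (X₁ × X₂)) :=
  {R | (∀ p₁, {q | (p₁, q) ∈ R} ∈ L₂) ∧ (∀ p₂, {q | (q, p₂) ∈ R} ∈ L₁)}

/-- Binary weak tensor product: axioms P1–P3. -/
def IsWTP₂ (L₁ : Set (Set X₁)) (L₂ : Set (Set X₂)) (M : Set (Set (X₁ × X₂))) : Prop :=
  IsSCS M ∧ (∀ a₁ ∈ L₁, ∀ a₂ ∈ L₂, cylUnion₂ a₁ a₂ ∈ M) ∧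
  (∀ p₁ : X₁, ∀ A₂ : Set X₂, {p₁} ×ˢ A₂ ∈ M → A₂ ∈ L₂) ∧
  (∀ p₂ : X₂, ∀ A₁ : Set X₁, A₁ ×ˢ {p₂} ∈ M → A₁ ∈ L₁)

/-- The simple closure space `MO_Σ`, containing only `∅`, `Σ` and the singletons. -/
def MOspace (X : Type*) : Set (Set X) := {∅, univ} ∪ {A | ∃ p, A = {p}}

end Binary

section AuxLemmas
set_option linter.unusedSectionVars false

variable {σ : Type*}

lemma subset_sJoin' (L : Set (Set σ)) (A : Set σ) : A ⊆ sJoin L A :=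
  fun _ hx => Set.mem_sInter.2 fun _ hb => hb.2 hx

lemma sJoin_le' {L : Set (Set σ)} {A b : Set σ} (hb : b ∈ L) (h : A ⊆ b) :
    sJoin L A ⊆ b := Set.sInter_subset_of_mem ⟨hb, h⟩

lemma sJoin_mem' {L : Set (Set σ)} (hL : IsSCS L) (A : Set σ) : sJoin L A ∈ L :=
  hL.1 _ (fun _ hb => hb.1)

lemma scs_inter_mem {L : Set (Set σ)} (hL : IsSCS L) {a b : Set σ}
    (ha : a ∈ L) (hb : b ∈ L) : a ∩ b ∈ L := by
  have := hL.1 {a, b} (by rintro x (rfl | rfl) <;> assumption)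
  simpa [Set.sInter_pair] using this

variable {Ω : Type*} [DecidableEq Ω] {X : Ω → Type*}

lemma sect_eq (R : Set (∀ α, X α)) (β : Ω) (p : ∀ α, X α) :
    sect R β p = {q | Function.update p β q ∈ R} := by
  ext q
  constructor
  · rintro ⟨r, hr, rfl, hoff⟩
    have : Function.update p β (r β) = r := by
      funext δ
      rcases eq_or_ne δ β with rfl | h
      · simp
      · rw [Function.update_of_ne h]; exact (hoff δ h).symm
    simp only [Set.mem_setOf_eq, this]; exact hr
  · intro h
    exact ⟨_, h, Function.update_self _ _ _, fun δ hδ => Function.update_of_ne hδ _ _⟩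

lemma mem_sect {R : Set (∀ α, X α)} {β : Ω} {p : ∀ α, X α} {q : X β} :
    q ∈ sect R β p ↔ Function.update p β q ∈ R := by
  rw [sect_eq]; rfl

lemma update_eq_of_agree {P x : ∀ α, X α} {β : Ω} (h : ∀ α, α ≠ β → x α = P α) :
    Function.update P β (x β) = x := by
  funext δ
  rcases eq_or_ne δ β with rfl | hδ
  · simp
  · rw [Function.update_of_ne hδ]; exact (h δ hδ).symm

lemma sect_congr {R : Set (∀ α, X α)} {β : Ω} {p p' : ∀ α, X α}
    (h : ∀ α, α ≠ β → p α = p' α) : sect R β p = sect R β p' := by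
  have key : ∀ q : X β, Function.update p β q = Function.update p' β q := by
    intro q; funext δ
    rcases eq_or_ne δ β with rfl | hδ
    · simp
    · rw [Function.update_of_ne hδ, Function.update_of_ne hδ]; exact h δ hδ
  ext q; rw [mem_sect, mem_sect, key]

lemma sect_union (R S : Set (∀ α, X α)) (β : Ω) (p : ∀ α, X α) :
    sect (R ∪ S) β p = sect R β p ∪ sect S β p := by
  ext q; simp [mem_sect, Set.mem_union]

lemma mem_fraserProd {L : ∀ α, Set (Set (X α))} {R : Set (∀ α, X α)} :
    R ∈ fraserProd L ↔ ∀ β p, sect R β p ∈ L β := Iff.rfl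

lemma fraser_isSCS {L : ∀ α, Set (Set (X α))} (hL : ∀ α, IsSCS (L α)) :
    IsSCS (fraserProd L) := by
  refine ⟨?_, ?_, ?_⟩
  · intro ω hω
    rw [mem_fraserProd]
    intro β p
    have : sect (⋂₀ ω) β p = ⋂₀ ((fun R => sect R β p) '' ω) := by
      ext q; simp [mem_sect]
    rw [this]
    exact (hL β).1 _ (by rintro _ ⟨R, hR, rfl⟩; exact hω hR β p)
  · rw [mem_fraserProd]
    intro β p
    have : sect (∅ : Set (∀ α, X α)) β p = ∅ := by ext q; simp [mem_sect]
    rw [this]; exact (hL β).2.1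
  · intro x
    rw [mem_fraserProd]
    intro β p
    by_cases h : ∀ δ, δ ≠ β → p δ = x δ
    · have : sect ({x} : Set (∀ α, X α)) β p = {x β} := by
        ext q
        rw [mem_sect]
        simp only [Set.mem_singleton_iff]
        constructor
        · intro hq; rw [← hq]; simp
        · rintro rfl
          exact update_eq_of_agree fun δ hδ => (h δ hδ).symm
      rw [this]; exact (hL β).2.2 _
    · push_neg at h
      obtain ⟨δ, hδ, hne⟩ := h
      have : sect ({x} : Set (∀ α, X α)) β p = ∅ := by
        ext q
        rw [mem_sect]
        simp only [Set.mem_singleton_iff, Set.mem_empty_iff_false, iff_false]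
        intro hq
        exact hne (by rw [← hq, Function.update_of_ne hδ])
      rw [this]; exact (hL β).2.1

lemma mem_pSub {t x : ∀ α, X α} {β : Ω} {B : Set (X β)} :
    x ∈ pSub t β B ↔ x β ∈ B ∧ ∀ α, α ≠ β → x α = t α := Iff.rfl

lemma update_mem_pSub {t : ∀ α, X α} {β : Ω} {B : Set (X β)} {q : X β} :
    Function.update t β q ∈ pSub t β B ↔ q ∈ B := by
  constructor
  · rintro ⟨h1, -⟩; simpa using h1
  · intro h
    exact ⟨by simpa using h, fun α hα => Function.update_of_ne hα _ _⟩

lemma pSub_mono {t : ∀ α, X α} {β : Ω} {B C : Set (X β)} (h : B ⊆ C) :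
    pSub t β B ⊆ pSub t β C := fun _ hx => ⟨h hx.1, hx.2⟩

lemma pSub_inj {t : ∀ α, X α} {β : Ω} {B C : Set (X β)}
    (h : pSub t β B = pSub t β C) : B = C := by
  ext q
  constructor
  · intro hq
    have := (update_mem_pSub (t := t) (B := B)).2 hq
    rw [h] at this
    exact update_mem_pSub.1 this
  · intro hq
    have := (update_mem_pSub (t := t) (B := C)).2 hq
    rw [← h] at this
    exact update_mem_pSub.1 this

lemma sect_pSub_pos {t p : ∀ α, X α} {β : Ω} {B : Set (X β)}
    (h : ∀ α, α ≠ β → p α = t α) : sect (pSub t β B) β p = B := by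
  ext v
  rw [mem_sect]
  constructor
  · rintro ⟨h1, -⟩; simpa using h1
  · intro hv
    refine ⟨by simpa using hv, fun α hα => ?_⟩
    rw [Function.update_of_ne hα]; exact h α hα

lemma sect_pSub_neg {t p : ∀ α, X α} {β : Ω} {B : Set (X β)}
    (h : ¬ ∀ α, α ≠ β → p α = t α) : sect (pSub t β B) β p = ∅ := by
  ext v
  simp only [Set.mem_empty_iff_false, iff_false]
  rw [mem_sect]
  rintro ⟨-, h2⟩
  exact h fun α hα => by rw [← h2 α hα, Function.update_of_ne hα]

lemma pSub_mem_fraser {L : ∀ α, Set (Set (X α))} (hL : ∀ α, IsSCS (L α))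
    {β : Ω} {B : Set (X β)} (hB : B ∈ L β) (t : ∀ α, X α) :
    pSub t β B ∈ fraserProd L := by
  rw [mem_fraserProd]
  intro γ p
  rcases eq_or_ne γ β with rfl | hγβ
  · by_cases h : ∀ α, α ≠ γ → p α = t α
    · rw [sect_pSub_pos h]; exact hB
    · rw [sect_pSub_neg h]; exact (hL γ).2.1
  · by_cases h : p β ∈ B ∧ ∀ α, α ≠ β → α ≠ γ → p α = t α
    · have : sect (pSub t β B) γ p = {t γ} := by
        ext q
        rw [mem_sect]
        simp only [Set.mem_singleton_iff]
        constructor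
        · rintro ⟨-, h2⟩
          have := h2 γ hγβ; rwa [Function.update_self] at this
        · rintro rfl
          refine ⟨by rw [Function.update_of_ne (Ne.symm hγβ)]; exact h.1, fun α hα => ?_⟩
          rcases eq_or_ne α γ with rfl | hαγ
          · simp
          · rw [Function.update_of_ne hαγ]; exact h.2 α hα hαγ
      rw [this]; exact (hL γ).2.2 _
    · have : sect (pSub t β B) γ p = ∅ := by
        ext q
        simp only [Set.mem_empty_iff_false, iff_false]
        rw [mem_sect]
        rintro ⟨h1, h2⟩
        refine h ⟨by rwa [Function.update_of_ne (Ne.symm hγβ)] at h1, fun α hα hαγ => ?_⟩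
        rw [← h2 α hα, Function.update_of_ne hαγ]
      rw [this]; exact (hL γ).2.1

lemma slice_mem_fraser {L : ∀ α, Set (Set (X α))} (hL : ∀ α, IsSCS (L α))
    {S : Set (∀ α, X α)}
    (hS : ∀ (δ : Ω) (w : ∀ α, X α), {v | Function.update w δ v ∈ S}.Subsingleton) :
    S ∈ fraserProd L := by
  rw [mem_fraserProd]
  intro δ w
  rw [sect_eq]
  rcases (hS δ w).eq_empty_or_singleton with h | ⟨v, h⟩ <;> rw [h]
  · exact (hL δ).2.1
  · exact (hL δ).2.2 v

/-- The point of the product with `β`-coordinate `x`, `γ`-coordinate `y`,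
and all other coordinates those of `t`. -/
def pt2 (t : ∀ α, X α) (β γ : Ω) (x : X β) (y : X γ) : ∀ α, X α :=
  Function.update (Function.update t β x) γ y

lemma pt2_gamma {t : ∀ α, X α} {β γ : Ω} {x : X β} {y : X γ} :
    pt2 t β γ x y γ = y := Function.update_self _ _ _

lemma pt2_beta {t : ∀ α, X α} {β γ : Ω} (h : β ≠ γ) {x : X β} {y : X γ} :
    pt2 t β γ x y β = x := by
  rw [pt2, Function.update_of_ne h, Function.update_self]

lemma pt2_other {t : ∀ α, X α} {β γ δ : Ω} {x : X β} {y : X γ}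
    (h1 : δ ≠ β) (h2 : δ ≠ γ) : pt2 t β γ x y δ = t δ := by
  rw [pt2, Function.update_of_ne h2, Function.update_of_ne h1]

lemma update_pt2_gamma {t : ∀ α, X α} {β γ : Ω} {x : X β} {y y' : X γ} :
    Function.update (pt2 t β γ x y) γ y' = pt2 t β γ x y' := by
  rw [pt2, pt2, Function.update_idem]

lemma update_pt2_beta {t : ∀ α, X α} {β γ : Ω} (h : β ≠ γ) {x x' : X β} {y : X γ} :
    Function.update (pt2 t β γ x y) β x' = pt2 t β γ x' y := by
  funext δ
  rcases eq_or_ne δ β with rfl | hδβ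
  · rw [Function.update_self, pt2_beta h]
  · rw [Function.update_of_ne hδβ]
    rcases eq_or_ne δ γ with rfl | hδγ
    · rw [pt2_gamma, pt2_gamma]
    · rw [pt2_other hδβ hδγ, pt2_other hδβ hδγ]

lemma pt2_inj {t : ∀ α, X α} {β γ : Ω} (h : β ≠ γ) {x x' : X β} {y y' : X γ}
    (he : pt2 t β γ x y = pt2 t β γ x' y') : x = x' ∧ y = y' :=
  ⟨by have := congrFun he β; rwa [pt2_beta h, pt2_beta h] at this,
   by have := congrFun he γ; rwa [pt2_gamma, pt2_gamma] at this⟩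

lemma pt2_coord {t : ∀ α, X α} {β γ : Ω} (h : β ≠ γ) {δ : Ω} {w : ∀ α, X α}
    {v1 v2 : X δ} {x1 x2 : X β} {y1 y2 : X γ}
    (h1 : Function.update w δ v1 = pt2 t β γ x1 y1)
    (h2 : Function.update w δ v2 = pt2 t β γ x2 y2) :
    x1 = x2 ∨ y1 = y2 := by
  rcases eq_or_ne δ β with rfl | hδβ
  · right
    have e1 := congrFun h1 γ
    have e2 := congrFun h2 γ
    rw [Function.update_of_ne (Ne.symm h), pt2_gamma] at e1 e2
    exact e1.symm.trans e2
  · left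
    have e1 := congrFun h1 β
    have e2 := congrFun h2 β
    rw [Function.update_of_ne (Ne.symm hδβ), pt2_beta h] at e1 e2
    exact e1.symm.trans e2

lemma eq_of_update_eq {w z : ∀ α, X α} {δ : Ω} {v1 v2 : X δ}
    (h1 : Function.update w δ v1 = z) (h2 : Function.update w δ v2 = z) : v1 = v2 := by
  have := congrFun (h1.trans h2.symm) δ
  simpa using this

end AuxLemmas

/-- (a) if the Fraser product has the covering property then so does every
factor; (b) if every factor has the covering property and at most one factor is not a
power set, then the Fraser product has the covering property; (c) if every factor that is
not a power set contains `MO₄`, then the Fraser product having the covering property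
forces at most one factor to not be a power set. -/
theorem stmt_17 {Ω : Type*} [Nonempty Ω] {X : Ω → Type*} [∀ α, Nonempty (X α)]
    (L : ∀ α, Set (Set (X α))) (hL : ∀ α, IsSCS (L α)) :
    (HasCovProp (fraserProd L) → ∀ α, HasCovProp (L α)) ∧
    ((∀ α, HasCovProp (L α)) →
      (∀ β γ, L β ≠ Set.univ → L γ ≠ Set.univ → β = γ) →
      HasCovProp (fraserProd L)) ∧
    ((∀ α, L α ≠ Set.univ → ContainsMO4 (L α)) → HasCovProp (fraserProd L) →
      ∀ β γ, L β ≠ Set.univ → L γ ≠ Set.univ → β = γ) := by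
  classical
  refine ⟨?_, ?_, ?_⟩
  -- Part (a)
  · intro hCov α q0 a ha hq0
    set t : ∀ δ, X δ := fun δ => Classical.arbitrary _ with ht
    set A := pSub t α a with hA
    set P := Function.update t α q0 with hP
    have hAM : A ∈ fraserProd L := pSub_mem_fraser hL ha t
    have hPA : P ∉ A := fun h => hq0 (by simpa [hP] using h.1)
    have hcov := hCov P A hAM hPA
    set j := sJoin (L α) (insert q0 a) with hj
    have hjL : j ∈ L α := sJoin_mem' (hL α) _
    have haj : a ⊆ j := (Set.subset_insert _ _).trans (subset_sJoin' _ _)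
    have hq0j : q0 ∈ j := subset_sJoin' _ _ (Set.mem_insert _ _)
    have hJ : sJoin (fraserProd L) (insert P A) = pSub t α j := by
      apply Set.Subset.antisymm
      · apply sJoin_le' (pSub_mem_fraser hL hjL t)
        rintro x (rfl | hx)
        · exact update_mem_pSub.2 hq0j
        · exact pSub_mono haj hx
      · set J := sJoin (fraserProd L) (insert P A) with hJdef
        have hJM : J ∈ fraserProd L := sJoin_mem' (fraser_isSCS hL) _
        have hsub : insert P A ⊆ J := subset_sJoin' _ _
        have hjsect : j ⊆ sect J α t := by
          apply sJoin_le' (hJM α t)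
          rintro y (rfl | hy)
          · exact mem_sect.2 (hsub (Set.mem_insert _ _))
          · exact mem_sect.2 (hsub (Set.mem_insert_of_mem _ (update_mem_pSub.2 hy)))
        rintro x ⟨hx1, hx2⟩
        have hx : Function.update t α (x α) = x := update_eq_of_agree hx2
        have := mem_sect.1 (hjsect hx1)
        rwa [hx] at this
    rw [hJ] at hcov
    constructor
    · exact (Set.ssubset_iff_of_subset haj).2 ⟨q0, hq0j, hq0⟩
    · intro c hc hac hcj
      rcases hcov.2 (pSub t α c) (pSub_mem_fraser hL hc t) (pSub_mono hac)
          (pSub_mono hcj) with h | h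
      · exact Or.inl (pSub_inj h)
      · exact Or.inr (pSub_inj h)
  -- Part (b)
  · intro hCov hone
    have hex : ∃ β₀ : Ω, ∀ δ, δ ≠ β₀ → L δ = Set.univ := by
      by_cases h : ∃ β, L β ≠ Set.univ
      · obtain ⟨β, hβ⟩ := h
        exact ⟨β, fun δ hδ => by_contra fun hδ' => hδ (hone δ β hδ' hβ)⟩
      · push_neg at h
        exact ⟨Classical.arbitrary Ω, fun δ _ => h δ⟩
    obtain ⟨β₀, hβ₀⟩ := hex
    intro P R hR hPR
    set s := sect R β₀ P with hs
    have hsL : s ∈ L β₀ := hR β₀ P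
    have hPs : P β₀ ∉ s := fun h => hPR (by rwa [mem_sect, Function.update_eq_self] at h)
    set c := sJoin (L β₀) (insert (P β₀) s) with hc
    have hcL : c ∈ L β₀ := sJoin_mem' (hL β₀) _
    have hsc : s ⊆ c := (Set.subset_insert _ _).trans (subset_sJoin' _ _)
    have hPc : P β₀ ∈ c := subset_sJoin' _ _ (Set.mem_insert _ _)
    set S := R ∪ pSub P β₀ c with hS
    have hSM : S ∈ fraserProd L := by
      rw [mem_fraserProd]
      intro δ p
      rcases eq_or_ne δ β₀ with rfl | hδ
      · rw [hS, sect_union]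
        by_cases hp : ∀ α, α ≠ δ → p α = P α
        · rw [sect_pSub_pos hp, sect_congr hp, ← hs, Set.union_eq_right.2 hsc]
          exact hcL
        · rw [sect_pSub_neg hp, Set.union_empty]
          exact hR δ p
      · rw [hβ₀ δ hδ]; trivial
    have hScl : sJoin (fraserProd L) (insert P R) = S := by
      apply Set.Subset.antisymm
      · apply sJoin_le' hSM
        rintro x (rfl | hx)
        · exact Or.inr ⟨hPc, fun α _ => rfl⟩
        · exact Or.inl hx
      · apply Set.subset_sInter
        rintro T ⟨hTM, hTsub⟩
        rintro x (hx | hx)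
        · exact hTsub (Set.mem_insert_of_mem _ hx)
        · obtain ⟨hx1, hx2⟩ := hx
          have hcT : c ⊆ sect T β₀ P := by
            apply sJoin_le' (hTM β₀ P)
            rintro y (rfl | hy)
            · exact mem_sect.2
                (by rw [Function.update_eq_self]; exact hTsub (Set.mem_insert _ _))
            · exact mem_sect.2 (hTsub (Set.mem_insert_of_mem _ (mem_sect.1 hy)))
          have := mem_sect.1 (hcT hx1)
          rwa [update_eq_of_agree hx2] at this
    rw [hScl]
    constructor
    · exact (Set.ssubset_iff_of_subset Set.subset_union_left).2
        ⟨P, Or.inr ⟨hPc, fun α _ => rfl⟩, hPR⟩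
    · intro T hTM hRT hTS
      by_cases hTR : T ⊆ R
      · exact Or.inl (Set.Subset.antisymm hTR hRT)
      · right
        obtain ⟨x, hxT, hxR⟩ := Set.not_subset.1 hTR
        rcases hTS hxT with hxS | hxS
        · exact absurd hxS hxR
        obtain ⟨hx1, hx2⟩ := hxS
        have hdL : sect T β₀ P ∩ c ∈ L β₀ := scs_inter_mem (hL β₀) (hTM β₀ P) hcL
        have hcovc := hCov β₀ (P β₀) s hsL hPs
        have hsd : s ⊆ sect T β₀ P ∩ c :=
          fun y hy => ⟨mem_sect.2 (hRT (mem_sect.1 hy)), hsc hy⟩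
        rcases hcovc.2 _ hdL hsd Set.inter_subset_right with hd | hd
        · exfalso
          have hx0 : x β₀ ∈ sect T β₀ P ∩ c :=
            ⟨mem_sect.2 (by rw [update_eq_of_agree hx2]; exact hxT), hx1⟩
          rw [hd] at hx0
          exact hxR (update_eq_of_agree hx2 ▸ mem_sect.1 hx0)
        · rw [Set.inter_eq_right] at hd
          apply Set.Subset.antisymm hTS
          rintro y (hy | hy)
          · exact hRT hy
          · obtain ⟨hy1, hy2⟩ := hy
            have := mem_sect.1 (hd hy1)
            rwa [update_eq_of_agree hy2] at this
  -- Part (c)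
  · intro hMO hCov β γ hLβ hLγ
    by_contra hβγ'
    have hne : β ≠ γ := hβγ'
    obtain ⟨p, q, r, s, hpq, hpr, hps, hqr, hqs, hrs, cp, cq, cr, cs⟩ := hMO β hLβ
    obtain ⟨p', q', r', s', hpq', hpr', hps', hqr', hqs', hrs', cp', cq', cr', cs'⟩ :=
      hMO γ hLγ
    set m := sJoin (L β) {p, q} with hm
    set m' := sJoin (L γ) {p', q'} with hm'
    have hmL : m ∈ L β := sJoin_mem' (hL β) _
    have hm'L : m' ∈ L γ := sJoin_mem' (hL γ) _
    have hrm : r ∈ m := cr.1.subset rfl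
    have hsm : s ∈ m := cs.1.subset rfl
    have hr'm : r' ∈ m' := cr'.1.subset rfl
    have hs'm : s' ∈ m' := cs'.1.subset rfl
    set t : ∀ δ, X δ := fun δ => Classical.arbitrary _ with htt
    set aset : Set (∀ δ, X δ) :=
      {pt2 t β γ p p', pt2 t β γ q q', pt2 t β γ r r'} with haset
    set cset : Set (∀ δ, X δ) := insert (pt2 t β γ s s') aset with hcset
    have hacsub : aset ⊆ cset := Set.subset_insert _ _
    have hcss : ∀ (δ : Ω) (w : ∀ α, X α),
        {v | Function.update w δ v ∈ cset}.Subsingleton := by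
      intro δ w v1 hv1 v2 hv2
      simp only [hcset, haset, Set.mem_setOf_eq, Set.mem_insert_iff,
        Set.mem_singleton_iff] at hv1 hv2
      rcases hv1 with h1 | h1 | h1 | h1 <;> rcases hv2 with h2 | h2 | h2 | h2 <;>
        rcases pt2_coord hne h1 h2 with h | h <;>
        first
          | exact eq_of_update_eq h1 h2
          | exact absurd h ‹_›
          | exact absurd h.symm ‹_›
    have hcM : cset ∈ fraserProd L := slice_mem_fraser hL hcss
    have haM : aset ∈ fraserProd L :=
      slice_mem_fraser hL fun δ w => (hcss δ w).anti fun v hv => hacsub hv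
    set P := pt2 t β γ p q' with hPdef
    have hPa : P ∉ aset := by
      rintro (h | h | h)
      · exact hpq' (pt2_inj hne h).2.symm
      · exact hpq (pt2_inj hne h).1
      · exact hpr (pt2_inj hne h).1
    set J := sJoin (fraserProd L) (insert P aset) with hJ
    have hJM : J ∈ fraserProd L := sJoin_mem' (fraser_isSCS hL) _
    have hins : insert P aset ⊆ J := subset_sJoin' _ _
    have hApp : pt2 t β γ p p' ∈ J :=
      hins (Set.mem_insert_of_mem _ (Set.mem_insert _ _))
    have hAqq : pt2 t β γ q q' ∈ J :=
      hins (Set.mem_insert_of_mem _ (Set.mem_insert_of_mem _ (Set.mem_insert _ _)))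
    have hArr : pt2 t β γ r r' ∈ J :=
      hins (Set.mem_insert_of_mem _ (Set.mem_insert_of_mem _
        (Set.mem_insert_of_mem _ rfl)))
    have hPJ : P ∈ J := hins (Set.mem_insert _ _)
    have sectγ : ∀ (x : X β) (y y' : X γ),
        y' ∈ sect J γ (pt2 t β γ x y) ↔ pt2 t β γ x y' ∈ J := by
      intro x y y'; rw [mem_sect, update_pt2_gamma]
    have sectβ : ∀ (x x' : X β) (y : X γ),
        x' ∈ sect J β (pt2 t β γ x y) ↔ pt2 t β γ x' y ∈ J := by
      intro x x' y; rw [mem_sect, update_pt2_beta hne]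
    -- step 1 : row p contains m', in particular pt2 p s'
    have hps' : pt2 t β γ p s' ∈ J := by
      have hsubd : m' ⊆ sect J γ (pt2 t β γ p p') := by
        apply sJoin_le' (hJM γ _)
        refine Set.insert_subset_iff.2 ⟨?_, Set.singleton_subset_iff.2 ?_⟩
        · exact (sectγ p p' p').2 hApp
        · exact (sectγ p p' q').2 hPJ
      exact (sectγ p p' s').1 (hsubd hs'm)
    -- step 2 : column q' contains m, in particular pt2 r q'
    have hrq' : pt2 t β γ r q' ∈ J := by
      have hsubd : m ⊆ sect J β (pt2 t β γ p q') := by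
        apply sJoin_le' (hJM β _)
        refine Set.insert_subset_iff.2 ⟨?_, Set.singleton_subset_iff.2 ?_⟩
        · exact (sectβ p p q').2 hPJ
        · exact (sectβ p q q').2 hAqq
      exact (sectβ p r q').1 (hsubd hrm)
    -- step 3 : row r contains m', in particular pt2 r s'
    have hrs' : pt2 t β γ r s' ∈ J := by
      set d := sect J γ (pt2 t β γ r r') ∩ m' with hd
      have hdL : d ∈ L γ := scs_inter_mem (hL γ) (hJM γ _) hm'L
      have hr'd : ({r'} : Set (X γ)) ⊆ d :=
        Set.singleton_subset_iff.2 ⟨(sectγ r r' r').2 hArr, hr'm⟩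
      rcases cr'.2 d hdL hr'd Set.inter_subset_right with hdeq | hdeq
      · exfalso
        have : q' ∈ d := ⟨(sectγ r r' q').2 hrq', subset_sJoin' _ _ (by simp)⟩
        rw [hdeq] at this
        exact hqr' (Set.mem_singleton_iff.1 this)
      · have : s' ∈ d := hdeq ▸ hs'm
        exact (sectγ r r' s').1 this.1
    -- step 4 : column s' contains m, in particular pt2 s s'
    have hss' : pt2 t β γ s s' ∈ J := by
      set d := sect J β (pt2 t β γ p s') ∩ m with hd
      have hdL : d ∈ L β := scs_inter_mem (hL β) (hJM β _) hmL
      have hpd : ({p} : Set (X β)) ⊆ d :=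
        Set.singleton_subset_iff.2 ⟨(sectβ p p s').2 hps', subset_sJoin' _ _ (by simp)⟩
      rcases cp.2 d hdL hpd Set.inter_subset_right with hdeq | hdeq
      · exfalso
        have : r ∈ d := ⟨(sectβ p r s').2 hrs', hrm⟩
        rw [hdeq] at this
        exact hpr (Set.mem_singleton_iff.1 this).symm
      · have : s ∈ d := hdeq ▸ hsm
        exact (sectβ p s s').1 this.1
    have hcsubJ : cset ⊆ J := by
      rintro z (rfl | hz)
      · exact hss'
      · exact hins (Set.mem_insert_of_mem _ hz)
    have hcov := hCov P aset haM hPa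
    rcases hcov.2 cset hcM hacsub hcsubJ with h | h
    · have : pt2 t β γ s s' ∈ aset := h ▸ Set.mem_insert _ _
      rcases this with h' | h' | h'
      · exact hps (pt2_inj hne h').1.symm
      · exact hqs (pt2_inj hne h').1.symm
      · exact hrs (pt2_inj hne h').1.symm
    · have : P ∈ cset := h ▸ hPJ
      rcases this with h' | h' | h' | h'
      · exact hps (pt2_inj hne h').1
      · exact hpq' (pt2_inj hne h').2.symm
      · exact hpq (pt2_inj hne h').1
      · exact hpr (pt2_inj hne h').1
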